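/- Let H be a finitely generated abelian group and S an affine space over the ℤ/2-vector space H^{(2)} = Hom(H, ℤ/2ℤ). Then there is a well-defined group homomorphism γ : 𝒴(A(S, ℤ/2ℤ), 1̄) → C(S, ℤ/2ℤ) satisfying γ(Y[f₁, f₂, f₃]) = f₁f₂f₃ (pointwise product of functions) for all affine functions f₁, f₂, f₃, and γ is a group isomorphism. -/

import Mathlib

section YGroup

/-- The subgroup of relators defining the group `𝒴(A, s)`: cyclic invariance,
multilinearity in the first entry, and the slide relation. -/
def YRel (A : Type*) [AddCommGroup A] (s : A) : AddSubgroup (FreeAbelianGroup (A × A × A)) :=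
  AddSubgroup.closure
    {x | (∃ a₁ a₂ a₃ : A, x = FreeAbelianGroup.of (a₁, a₂, a₃) - FreeAbelianGroup.of (a₂, a₃, a₁))
      ∨ (∃ a₁ a₁' a₂ a₃ : A, x = FreeAbelianGroup.of (a₁ + a₁', a₂, a₃)
          - FreeAbelianGroup.of (a₁, a₂, a₃) - FreeAbelianGroup.of (a₁', a₂, a₃))
      ∨ (∃ a₁ a₂ : A, x = FreeAbelianGroup.of (a₁, a₁, a₂) - FreeAbelianGroup.of (s, a₁, a₂))}

/-- The group `𝒴(A, s)`: the quotient of the free abelian group on `A × A × A` by the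
cyclic invariance, multilinearity and slide relations. -/
abbrev YGroup (A : Type*) [AddCommGroup A] (s : A) : Type _ :=
  FreeAbelianGroup (A × A × A) ⧸ YRel A s

/-- The class `Y[a₁, a₂, a₃]` in `𝒴(A, s)`. -/
def Ysym {A : Type*} [AddCommGroup A] (s : A) (a₁ a₂ a₃ : A) : YGroup A s :=
  QuotientAddGroup.mk (FreeAbelianGroup.of (a₁, a₂, a₃))

end YGroup

section Affine

variable (H : Type*) [AddCommGroup H] (S : Type*) [AddTorsor (H →+ ZMod 2) S]

/-- A function `f : S → ℤ/2ℤ` is affine if there is a homomorphism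
`l : Hom(H, ℤ/2ℤ) → ℤ/2ℤ` (its linear part) with `f(σ + y) = f(σ) + l(y)`. -/
def IsAffineFn (f : S → ZMod 2) : Prop :=
  ∃ l : (H →+ ZMod 2) →+ ZMod 2, ∀ (σ : S) (y : H →+ ZMod 2), f (y +ᵥ σ) = f σ + l y

/-- The abelian group `A(S, ℤ/2ℤ)` of affine functions `S → ℤ/2ℤ` under pointwise addition. -/
def AffineFns : AddSubgroup (S → ZMod 2) where
  carrier := {f | IsAffineFn H S f}
  add_mem' := by
    rintro f g ⟨lf, hf⟩ ⟨lg, hg⟩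
    exact ⟨lf + lg, fun σ y => by
      simp only [Pi.add_apply, AddMonoidHom.add_apply, hf σ y, hg σ y]; abel⟩
  zero_mem' := ⟨0, fun σ y => by simp⟩
  neg_mem' := by
    rintro f ⟨lf, hf⟩
    exact ⟨-lf, fun σ y => by
      simp only [Pi.neg_apply, AddMonoidHom.neg_apply, hf σ y]; abel⟩

/-- The abelian group `C(S, ℤ/2ℤ)` of cubic functions `S → ℤ/2ℤ`, i.e. finite sums of
pointwise products of three affine functions (note that every element of `S → ℤ/2ℤ` is its
own negative, so the subgroup generated by such products consists exactly of the finite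
sums of such products). -/
def CubicFns : AddSubgroup (S → ZMod 2) :=
  AddSubgroup.closure
    {f | ∃ f₁ f₂ f₃ : S → ZMod 2,
      IsAffineFn H S f₁ ∧ IsAffineFn H S f₂ ∧ IsAffineFn H S f₃ ∧ f = f₁ * f₂ * f₃}

/-- The constant function `1̄`, as an element of `A(S, ℤ/2ℤ)`. -/
def oneAff : AffineFns H S :=
  ⟨fun _ => 1, ⟨0, fun σ y => by simp⟩⟩

end Affine

namespace Stmt2Aux

/-! ### Generalities on `ZMod 2` -/

lemma zmod2_cases : ∀ c : ZMod 2, c = 0 ∨ c = 1 := by decide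
lemma zmod2_mul_self : ∀ c : ZMod 2, c * c = c := by decide
lemma zmod2_add_self : ∀ c : ZMod 2, c + c = 0 := by decide
lemma zmod2_neg : ∀ c : ZMod 2, -c = c := by decide

/-! ### Generalities on `YGroup` -/

section YGroupLemmas

variable {A : Type*} [AddCommGroup A] (s : A)

lemma yrel_cyc (a₁ a₂ a₃ : A) :
    FreeAbelianGroup.of (a₁, a₂, a₃) - FreeAbelianGroup.of (a₂, a₃, a₁) ∈ YRel A s :=
  AddSubgroup.subset_closure (Or.inl ⟨a₁, a₂, a₃, rfl⟩)

lemma yrel_add (a₁ a₁' a₂ a₃ : A) :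
    FreeAbelianGroup.of (a₁ + a₁', a₂, a₃) - FreeAbelianGroup.of (a₁, a₂, a₃)
      - FreeAbelianGroup.of (a₁', a₂, a₃) ∈ YRel A s :=
  AddSubgroup.subset_closure (Or.inr (Or.inl ⟨a₁, a₁', a₂, a₃, rfl⟩))

lemma yrel_slide (a₁ a₂ : A) :
    FreeAbelianGroup.of (a₁, a₁, a₂) - FreeAbelianGroup.of (s, a₁, a₂) ∈ YRel A s :=
  AddSubgroup.subset_closure (Or.inr (Or.inr ⟨a₁, a₂, rfl⟩))

lemma ysym_cyc (a₁ a₂ a₃ : A) : Ysym s a₁ a₂ a₃ = Ysym s a₂ a₃ a₁ := by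
  rw [Ysym, Ysym, QuotientAddGroup.eq]
  have := (YRel A s).neg_mem (yrel_cyc s a₁ a₂ a₃)
  simpa [neg_sub, sub_eq_neg_add] using this

lemma ysym_addl (a₁ a₁' a₂ a₃ : A) :
    Ysym s (a₁ + a₁') a₂ a₃ = Ysym s a₁ a₂ a₃ + Ysym s a₁' a₂ a₃ := by
  rw [Ysym, Ysym, Ysym, ← QuotientAddGroup.mk_add, QuotientAddGroup.eq]
  have := (YRel A s).neg_mem (yrel_add s a₁ a₁' a₂ a₃)
  simpa [neg_sub, sub_eq_neg_add, add_assoc] using this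

lemma ysym_slide (a₁ a₂ : A) : Ysym s a₁ a₁ a₂ = Ysym s s a₁ a₂ := by
  rw [Ysym, Ysym, QuotientAddGroup.eq]
  have := (YRel A s).neg_mem (yrel_slide s a₁ a₂)
  simpa [neg_sub, sub_eq_neg_add] using this

lemma ysym_add₂ (a₁ a₂ a₂' a₃ : A) :
    Ysym s a₁ (a₂ + a₂') a₃ = Ysym s a₁ a₂ a₃ + Ysym s a₁ a₂' a₃ := by
  rw [ysym_cyc s a₁ (a₂ + a₂') a₃, ysym_addl, ← ysym_cyc s a₁ a₂ a₃, ← ysym_cyc s a₁ a₂' a₃]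

lemma ysym_add₃ (a₁ a₂ a₃ a₃' : A) :
    Ysym s a₁ a₂ (a₃ + a₃') = Ysym s a₁ a₂ a₃ + Ysym s a₁ a₂ a₃' := by
  rw [ysym_cyc s a₁ a₂ (a₃ + a₃'), ysym_add₂, ← ysym_cyc s a₁ a₂ a₃, ← ysym_cyc s a₁ a₂ a₃']

lemma ysym_zerol (a₂ a₃ : A) : Ysym s 0 a₂ a₃ = 0 := by
  have h := ysym_addl s 0 0 a₂ a₃
  rw [add_zero] at h
  exact (left_eq_add.mp h)

lemma ysym_zero₂ (a₁ a₃ : A) : Ysym s a₁ 0 a₃ = 0 := by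
  have h := ysym_add₂ s a₁ 0 0 a₃
  rw [add_zero] at h
  exact (left_eq_add.mp h)

lemma ysym_zero₃ (a₁ a₂ : A) : Ysym s a₁ a₂ 0 = 0 := by
  have h := ysym_add₃ s a₁ a₂ 0 0
  rw [add_zero] at h
  exact (left_eq_add.mp h)

variable (h2 : ∀ a : A, a + a = 0)
include h2

lemma ysym_self_add (a₁ a₂ a₃ : A) : Ysym s a₁ a₂ a₃ + Ysym s a₁ a₂ a₃ = 0 := by
  rw [← ysym_addl, h2, ysym_zerol]

lemma ysym_neg (a₁ a₂ a₃ : A) : -Ysym s a₁ a₂ a₃ = Ysym s a₁ a₂ a₃ :=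
  neg_eq_of_add_eq_zero_left (ysym_self_add s h2 a₁ a₂ a₃)

lemma ysym_swap (a₁ a₂ a₃ : A) : Ysym s a₁ a₂ a₃ = Ysym s a₂ a₁ a₃ := by
  have key : Ysym s (a₁ + a₂) (a₁ + a₂) a₃ = Ysym s s (a₁ + a₂) a₃ := ysym_slide s _ _
  rw [ysym_addl, ysym_add₂, ysym_add₂, ysym_add₂, ysym_slide, ysym_slide] at key
  have h0 : Ysym s a₁ a₂ a₃ + Ysym s a₂ a₁ a₃ = 0 := by
    have h' : Ysym s a₁ a₂ a₃ + Ysym s a₂ a₁ a₃ +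
        (Ysym s s a₁ a₃ + Ysym s s a₂ a₃) = Ysym s s a₁ a₃ + Ysym s s a₂ a₃ := by
      conv_rhs => rw [← key]
      abel
    exact add_right_cancel (by rw [h', zero_add])
  rw [← ysym_neg s h2 a₂ a₁ a₃]
  exact eq_neg_of_add_eq_zero_left h0

lemma ysym_swap23 (a₁ a₂ a₃ : A) : Ysym s a₁ a₂ a₃ = Ysym s a₁ a₃ a₂ := by
  rw [ysym_swap s h2 a₁ a₂ a₃, ysym_cyc]

lemma ysym_swap13 (a₁ a₂ a₃ : A) : Ysym s a₁ a₂ a₃ = Ysym s a₃ a₂ a₁ := by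
  rw [ysym_cyc s a₁ a₂ a₃, ysym_swap s h2]

lemma ygroup_two (y : YGroup A s) : y + y = 0 := by
  induction y using QuotientAddGroup.induction_on with
  | H z =>
    rw [← QuotientAddGroup.mk_add, QuotientAddGroup.eq_zero_iff]
    induction z using FreeAbelianGroup.induction_on with
    | zero => simpa using (YRel A s).zero_mem
    | of t =>
      obtain ⟨t₁, t₂, t₃⟩ := t
      have g2 := yrel_add s t₁ t₁ t₂ t₃
      rw [h2 t₁] at g2
      have g0 : FreeAbelianGroup.of ((0 : A), t₂, t₃) ∈ YRel A s := by
        have := yrel_add s 0 0 t₂ t₃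
        rw [add_zero] at this
        have h' := (YRel A s).neg_mem this
        simpa [neg_sub, sub_eq_neg_add] using h'
      have := (YRel A s).sub_mem g0 g2
      simpa [sub_sub, sub_sub_cancel] using this
    | neg z hz =>
      have h' : -FreeAbelianGroup.of z + -FreeAbelianGroup.of z
          = -(FreeAbelianGroup.of z + FreeAbelianGroup.of z) := by abel
      rw [h']
      exact (YRel A s).neg_mem hz
    | add z w hz hw =>
      have h' : z + w + (z + w) = (z + z) + (w + w) := by abel
      rw [h']
      exact (YRel A s).add_mem hz hw

lemma ygroup_neg (y : YGroup A s) : -y = y :=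
  neg_eq_of_add_eq_zero_left (ygroup_two s h2 y)

end YGroupLemmas

/-! ### Counting subsets -/

section Counting

variable {α : Type*} [DecidableEq α]

lemma card_between (T T' : Finset α) (h : T' ⊆ T) :
    (T.powerset.filter fun U => T' ⊆ U).card = 2 ^ (T.card - T'.card) := by
  rw [← Finset.card_sdiff_of_subset h, ← Finset.card_powerset]
  refine Finset.card_bij' (fun U _ => U \ T') (fun V _ => V ∪ T') ?_ ?_ ?_ ?_
  · intro U hU
    simp only [Finset.mem_filter, Finset.mem_powerset] at hU
    exact Finset.mem_powerset.mpr (Finset.sdiff_subset_sdiff hU.1 le_rfl)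
  · intro V hV
    simp only [Finset.mem_powerset] at hV
    refine Finset.mem_filter.mpr ⟨Finset.mem_powerset.mpr ?_, Finset.subset_union_right⟩
    exact Finset.union_subset (hV.trans (Finset.sdiff_subset)) h
  · intro U hU
    simp only [Finset.mem_filter, Finset.mem_powerset] at hU
    exact Finset.sdiff_union_of_subset hU.2
  · intro V hV
    simp only [Finset.mem_powerset] at hV
    have hd : Disjoint V T' := Finset.sdiff_disjoint.mono_left hV
    show (V ∪ T') \ T' = V
    rw [Finset.union_sdiff_distrib, Finset.sdiff_self, Finset.union_empty,
      Finset.sdiff_eq_self_of_disjoint hd]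

lemma card_between_zmod (T T' : Finset α) :
    (((T.powerset.filter fun U => T' ⊆ U).card : ℕ) : ZMod 2)
      = if T = T' then 1 else 0 := by
  by_cases h : T' ⊆ T
  · rw [card_between T T' h]
    rcases eq_or_ne T T' with rfl | hne
    · simp
    · have hlt : T'.card < T.card := Finset.card_lt_card (lt_of_le_of_ne h (Ne.symm hne))
      have hpos : 0 < T.card - T'.card := Nat.sub_pos_of_lt hlt
      rw [if_neg hne, Nat.cast_pow, show ((2 : ℕ) : ZMod 2) = 0 by decide]
      exact zero_pow hpos.ne'
  · have he : T.powerset.filter (fun U => T' ⊆ U) = ∅ := by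
      refine Finset.filter_eq_empty_iff.mpr ?_
      intro U hU hsub
      exact h (hsub.trans (Finset.mem_powerset.mp hU))
    rw [he]
    have hne : T ≠ T' := by rintro rfl; exact h le_rfl
    simp [hne]

end Counting

/-! ### The main construction -/

section Main

variable {H : Type*} [AddCommGroup H] {S : Type*} [AddTorsor (H →+ ZMod 2) S]

lemma haff2 (f : AffineFns H S) : f + f = 0 := by
  apply Subtype.ext
  funext σ
  exact zmod2_add_self _

lemma haffneg (f : AffineFns H S) : -f = f :=
  neg_eq_of_add_eq_zero_left (haff2 f)

/-! #### The homomorphism `γ` -/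

def cubeOf (t : AffineFns H S × AffineFns H S × AffineFns H S) : CubicFns H S :=
  ⟨(t.1 : S → ZMod 2) * (t.2.1 : S → ZMod 2) * (t.2.2 : S → ZMod 2),
    AddSubgroup.subset_closure ⟨t.1, t.2.1, t.2.2, t.1.2, t.2.1.2, t.2.2.2, rfl⟩⟩

def gamma0 : FreeAbelianGroup (AffineFns H S × AffineFns H S × AffineFns H S) →+ CubicFns H S :=
  FreeAbelianGroup.lift cubeOf

lemma gamma0_of (t) : (gamma0 (FreeAbelianGroup.of t) : CubicFns H S) = cubeOf t :=
  FreeAbelianGroup.lift_apply_of _ _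

lemma gamma0_rel : YRel (AffineFns H S) (oneAff H S) ≤ (gamma0 (H := H) (S := S)).ker := by
  rw [YRel, AddSubgroup.closure_le]
  rintro x (⟨a₁, a₂, a₃, rfl⟩ | ⟨a₁, a₁', a₂, a₃, rfl⟩ | ⟨a₁, a₂, rfl⟩)
  · simp only [Set.mem_setOf_eq, SetLike.mem_coe, AddMonoidHom.mem_ker, map_sub, gamma0,
      FreeAbelianGroup.lift_apply_of]
    apply Subtype.ext
    funext σ
    simp only [cubeOf, AddSubgroup.coe_sub, Pi.sub_apply, Pi.mul_apply, AddSubgroup.coe_zero,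
      Pi.zero_apply]
    ring
  · simp only [Set.mem_setOf_eq, SetLike.mem_coe, AddMonoidHom.mem_ker, map_sub, gamma0,
      FreeAbelianGroup.lift_apply_of]
    apply Subtype.ext
    funext σ
    simp only [cubeOf, AddSubgroup.coe_sub, Pi.sub_apply, Pi.mul_apply, AddSubgroup.coe_zero,
      Pi.zero_apply, AddSubgroup.coe_add, Pi.add_apply]
    ring
  · simp only [Set.mem_setOf_eq, SetLike.mem_coe, AddMonoidHom.mem_ker, map_sub, gamma0,
      FreeAbelianGroup.lift_apply_of]
    apply Subtype.ext
    funext σ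
    simp only [cubeOf, AddSubgroup.coe_sub, Pi.sub_apply, Pi.mul_apply, AddSubgroup.coe_zero,
      Pi.zero_apply]
    have h1 : ((oneAff H S : AffineFns H S) : S → ZMod 2) σ = 1 := rfl
    rw [h1, zmod2_mul_self, one_mul, sub_self]

def gammaHom : YGroup (AffineFns H S) (oneAff H S) →+ CubicFns H S :=
  QuotientAddGroup.lift _ gamma0 gamma0_rel

lemma gammaHom_ysym (f₁ f₂ f₃ : AffineFns H S) :
    (gammaHom (Ysym (oneAff H S) f₁ f₂ f₃) : S → ZMod 2) =
      (f₁ : S → ZMod 2) * (f₂ : S → ZMod 2) * (f₃ : S → ZMod 2) := by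
  show ((gamma0 (FreeAbelianGroup.of (f₁, f₂, f₃)) : CubicFns H S) : S → ZMod 2) = _
  rw [gamma0_of]
  rfl

/-! #### Coordinates -/

variable {n : ℕ} (bV : Module.Basis (Fin n) (ZMod 2) (H →+ ZMod 2)) (σ₀ : S)

noncomputable def Xfun (i : Fin n) : S → ZMod 2 := fun σ => bV.repr (σ -ᵥ σ₀) i

lemma Xfun_affine (i : Fin n) : IsAffineFn H S (Xfun bV σ₀ i) := by
  refine ⟨((Finsupp.applyAddHom i).comp bV.repr.toAddMonoidHom : _), fun σ y => ?_⟩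
  simp only [Xfun, vadd_vsub_assoc, map_add]
  simp [add_comm]

noncomputable def Xaff (i : Fin n) : AffineFns H S := ⟨Xfun bV σ₀ i, Xfun_affine bV σ₀ i⟩

lemma smul_zmod2 (c : ZMod 2) (w : H →+ ZMod 2) (l : (H →+ ZMod 2) →+ ZMod 2) :
    l (c • w) = c * l w := by
  rcases zmod2_cases c with h | h <;> subst h <;> simp

lemma linear_eval (l : (H →+ ZMod 2) →+ ZMod 2) (v : H →+ ZMod 2) :
    l v = ∑ i : Fin n, bV.repr v i * l (bV i) := by
  conv_lhs => rw [← Module.Basis.sum_repr bV v]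
  rw [map_sum]
  exact Finset.sum_congr rfl fun i _ => smul_zmod2 _ _ _

def gens : Set (AffineFns H S) := {oneAff H S} ∪ Set.range (Xaff bV σ₀)

lemma mem_closure_gens (f : AffineFns H S) :
    f ∈ AddSubgroup.closure (gens bV σ₀) := by
  obtain ⟨l, hl⟩ := f.2
  have hf : f = (if (f : S → ZMod 2) σ₀ = 1 then oneAff H S else 0)
      + ∑ i : Fin n, (if l (bV i) = 1 then Xaff bV σ₀ i else 0) := by
    apply Subtype.ext
    funext σ
    have hfσ : (f : S → ZMod 2) σ = (f : S → ZMod 2) σ₀ + l (σ -ᵥ σ₀) := by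
      conv_lhs => rw [← vsub_vadd σ σ₀]
      exact hl σ₀ (σ -ᵥ σ₀)
    have hsum : ((∑ i : Fin n, (if l (bV i) = 1 then Xaff bV σ₀ i else 0) : AffineFns H S) :
        S → ZMod 2) σ = ∑ i : Fin n, bV.repr (σ -ᵥ σ₀) i * l (bV i) := by
      rw [AddSubmonoidClass.coe_finset_sum, Finset.sum_apply]
      refine Finset.sum_congr rfl fun i _ => ?_
      rcases zmod2_cases (l (bV i)) with h | h <;> simp [h, Xfun, Xaff]
    rw [AddSubgroup.coe_add, Pi.add_apply, hsum, hfσ, linear_eval bV l]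
    congr 1
    rcases zmod2_cases ((f : S → ZMod 2) σ₀) with h | h <;> simp [h, oneAff]
  rw [hf]
  refine AddSubgroup.add_mem _ ?_ (AddSubgroup.sum_mem _ fun i _ => ?_)
  · split
    · exact AddSubgroup.subset_closure (Or.inl rfl)
    · exact AddSubgroup.zero_mem _
  · split
    · exact AddSubgroup.subset_closure (Or.inr ⟨i, rfl⟩)
    · exact AddSubgroup.zero_mem _

/-! #### Monomials and finite differences -/

noncomputable def mT (T : Finset (Fin n)) : S → ZMod 2 := fun σ => ∏ i ∈ T, Xfun bV σ₀ i σ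

noncomputable def epsT (T : Finset (Fin n)) (g : S → ZMod 2) : ZMod 2 :=
  ∑ U ∈ T.powerset, g ((∑ i ∈ U, bV i) +ᵥ σ₀)

lemma epsT_add (T : Finset (Fin n)) (g g' : S → ZMod 2) :
    epsT bV σ₀ T (g + g') = epsT bV σ₀ T g + epsT bV σ₀ T g' := by
  simp [epsT, Finset.sum_add_distrib]

lemma epsT_zero (T : Finset (Fin n)) : epsT bV σ₀ T (0 : S → ZMod 2) = 0 := by
  simp [epsT]

lemma Xfun_point (i : Fin n) (U : Finset (Fin n)) :
    Xfun bV σ₀ i ((∑ j ∈ U, bV j) +ᵥ σ₀) = if i ∈ U then 1 else 0 := by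
  rw [Xfun, vadd_vsub, map_sum, Finsupp.finset_sum_apply]
  rw [Finset.sum_congr rfl (fun j _ => by rw [Module.Basis.repr_self, Finsupp.single_apply])]
  exact Finset.sum_ite_eq' U i (fun _ => 1)

lemma mT_point (T' U : Finset (Fin n)) :
    mT bV σ₀ T' ((∑ j ∈ U, bV j) +ᵥ σ₀) = if T' ⊆ U then 1 else 0 := by
  rw [mT]
  by_cases h : T' ⊆ U
  · rw [if_pos h]
    refine Finset.prod_eq_one fun i hi => ?_
    rw [Xfun_point, if_pos (h hi)]
  · rw [if_neg h]
    obtain ⟨i, hiT, hiU⟩ := Finset.not_subset.mp h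
    exact Finset.prod_eq_zero hiT (by rw [Xfun_point, if_neg hiU])

lemma eps_m (T T' : Finset (Fin n)) :
    epsT bV σ₀ T (mT bV σ₀ T') = if T = T' then 1 else 0 := by
  rw [epsT, Finset.sum_congr rfl fun U _ => mT_point bV σ₀ T' U, Finset.sum_boole]
  exact card_between_zmod T T'

/-! #### The inverse map `δ` -/

noncomputable def yTl : List (Fin n) → YGroup (AffineFns H S) (oneAff H S)
  | [] => Ysym (oneAff H S) (oneAff H S) (oneAff H S) (oneAff H S)
  | [i] => Ysym (oneAff H S) (oneAff H S) (oneAff H S) (Xaff bV σ₀ i)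
  | [i, j] => Ysym (oneAff H S) (oneAff H S) (Xaff bV σ₀ i) (Xaff bV σ₀ j)
  | [i, j, k] => Ysym (oneAff H S) (Xaff bV σ₀ i) (Xaff bV σ₀ j) (Xaff bV σ₀ k)
  | _ => 0

noncomputable def yT (T : Finset (Fin n)) : YGroup (AffineFns H S) (oneAff H S) :=
  yTl bV σ₀ (T.sort (· ≤ ·))

noncomputable def deltaFun (g : S → ZMod 2) : YGroup (AffineFns H S) (oneAff H S) :=
  ∑ T : Finset (Fin n), if epsT bV σ₀ T g = 1 then yT bV σ₀ T else 0

lemma deltaFun_add (g g' : S → ZMod 2) :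
    deltaFun bV σ₀ (g + g') = deltaFun bV σ₀ g + deltaFun bV σ₀ g' := by
  rw [deltaFun, deltaFun, deltaFun, ← Finset.sum_add_distrib]
  refine Finset.sum_congr rfl fun T _ => ?_
  rw [epsT_add]
  rcases zmod2_cases (epsT bV σ₀ T g) with h | h <;>
    rcases zmod2_cases (epsT bV σ₀ T g') with h' | h' <;>
    rw [h, h']
  · norm_num
  · norm_num
  · norm_num
  · rw [show ((1 : ZMod 2) + 1) = 0 by decide]
    norm_num
    exact (ygroup_two _ haff2 _).symm

lemma deltaFun_zero : deltaFun bV σ₀ (0 : S → ZMod 2) = 0 := by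
  rw [deltaFun]
  refine Finset.sum_eq_zero fun T _ => ?_
  rw [epsT_zero]
  norm_num

lemma deltaFun_neg (g : S → ZMod 2) : deltaFun bV σ₀ (-g) = deltaFun bV σ₀ g := by
  congr 1
  funext σ
  exact zmod2_neg _

lemma delta_m (T' : Finset (Fin n)) : deltaFun bV σ₀ (mT bV σ₀ T') = yT bV σ₀ T' := by
  rw [deltaFun]
  rw [Finset.sum_congr rfl fun T _ => by rw [eps_m]]
  have : ∀ T : Finset (Fin n), (if (if T = T' then (1 : ZMod 2) else 0) = 1
      then yT bV σ₀ T else 0) = if T = T' then yT bV σ₀ T else 0 := by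
    intro T
    rcases eq_or_ne T T' with rfl | h
    · simp
    · simp [h]
  rw [Finset.sum_congr rfl fun T _ => this T]
  simp

/-! #### Values of `yT` -/

lemma sort_pair {i j : Fin n} (h : i < j) :
    ({i, j} : Finset (Fin n)).sort (· ≤ ·) = [i, j] := by
  rw [show ({i, j} : Finset (Fin n)) = insert i {j} from rfl]
  rw [Finset.sort_insert]
  · rw [Finset.sort_singleton]
  · intro b hb
    rw [Finset.mem_singleton] at hb
    exact hb ▸ h.le
  · rw [Finset.mem_singleton]
    exact h.ne

lemma sort_triple {i j k : Fin n} (h1 : i < j) (h2 : j < k) :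
    ({i, j, k} : Finset (Fin n)).sort (· ≤ ·) = [i, j, k] := by
  rw [show ({i, j, k} : Finset (Fin n)) = insert i {j, k} from rfl]
  rw [Finset.sort_insert]
  · rw [sort_pair h2]
  · intro b hb
    rw [Finset.mem_insert, Finset.mem_singleton] at hb
    rcases hb with rfl | rfl
    · exact h1.le
    · exact (h1.trans h2).le
  · rw [Finset.mem_insert, Finset.mem_singleton]
    rintro (rfl | rfl)
    · exact absurd h1 (lt_irrefl _)
    · exact absurd (h1.trans h2) (lt_irrefl _)

lemma yT_empty : yT bV σ₀ (∅ : Finset (Fin n))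
    = Ysym (oneAff H S) (oneAff H S) (oneAff H S) (oneAff H S) := by
  rw [yT, Finset.sort_empty]
  rfl

lemma yT_single (i : Fin n) : yT bV σ₀ {i}
    = Ysym (oneAff H S) (oneAff H S) (oneAff H S) (Xaff bV σ₀ i) := by
  rw [yT, Finset.sort_singleton]
  rfl

lemma yT_pair {i j : Fin n} (h : i ≠ j) : yT bV σ₀ {i, j}
    = Ysym (oneAff H S) (oneAff H S) (Xaff bV σ₀ i) (Xaff bV σ₀ j) := by
  rcases h.lt_or_gt with hlt | hlt
  · rw [yT, sort_pair hlt]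
    rfl
  · rw [Finset.pair_comm i j, yT, sort_pair hlt]
    exact (ysym_swap23 _ haff2 _ _ _).symm

lemma yT_triple {i j k : Fin n} (hij : i ≠ j) (hik : i ≠ k) (hjk : j ≠ k) :
    yT bV σ₀ {i, j, k}
      = Ysym (oneAff H S) (Xaff bV σ₀ i) (Xaff bV σ₀ j) (Xaff bV σ₀ k) := by
  rcases hij.lt_or_gt with h1 | h1
  · rcases hjk.lt_or_gt with h2 | h2
    · -- i < j < k
      rw [yT, sort_triple h1 h2]
      rfl
    · rcases hik.lt_or_gt with h3 | h3
      · -- i < k < j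
        rw [show ({i, j, k} : Finset (Fin n)) = {i, k, j} by rw [Finset.pair_comm j k]]
        rw [yT, sort_triple h3 h2]
        exact (ysym_swap23 _ haff2 _ _ _).symm
      · -- k < i < j
        rw [show ({i, j, k} : Finset (Fin n)) = {k, i, j} by
          rw [Finset.pair_comm j k, Finset.insert_comm]]
        rw [yT, sort_triple h3 h1]
        show Ysym (oneAff H S) (Xaff bV σ₀ k) (Xaff bV σ₀ i) (Xaff bV σ₀ j) = _
        exact ysym_cyc _ _ _ _
  · rcases hik.lt_or_gt with h2 | h2
    · -- j < i < k
      rw [show ({i, j, k} : Finset (Fin n)) = {j, i, k} by rw [Finset.insert_comm]]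
      rw [yT, sort_triple h1 h2]
      exact (ysym_swap _ haff2 _ _ _).symm
    · rcases hjk.lt_or_gt with h3 | h3
      · -- j < k < i
        rw [show ({i, j, k} : Finset (Fin n)) = {j, k, i} by
          rw [Finset.insert_comm, Finset.pair_comm i k]]
        rw [yT, sort_triple h3 h2]
        show Ysym (oneAff H S) (Xaff bV σ₀ j) (Xaff bV σ₀ k) (Xaff bV σ₀ i) = _
        exact (ysym_cyc _ _ _ _).symm
      · -- k < j < i
        rw [show ({i, j, k} : Finset (Fin n)) = {k, j, i} by
          rw [Finset.insert_comm, Finset.pair_comm i k, Finset.insert_comm]]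
        rw [yT, sort_triple h3 h1]
        exact (ysym_swap13 _ haff2 _ _ _).symm

/-! #### `δ` on products of generators -/

lemma oneAff_apply (σ : S) : ((oneAff H S : AffineFns H S) : S → ZMod 2) σ = 1 := rfl

lemma Xaff_apply (i : Fin n) (σ : S) :
    ((Xaff bV σ₀ i : AffineFns H S) : S → ZMod 2) σ = Xfun bV σ₀ i σ := rfl

lemma dP0 : deltaFun bV σ₀
      ((oneAff H S : S → ZMod 2) * (oneAff H S : S → ZMod 2) * (oneAff H S : S → ZMod 2))
    = Ysym (oneAff H S) (oneAff H S) (oneAff H S) (oneAff H S) := by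
  have hp : ((oneAff H S : S → ZMod 2) * (oneAff H S : S → ZMod 2) * (oneAff H S : S → ZMod 2))
      = mT bV σ₀ (∅ : Finset (Fin n)) := by
    funext σ
    simp [mT, oneAff_apply]
  rw [hp, delta_m, yT_empty]

lemma dP1 (i : Fin n) : deltaFun bV σ₀
      ((oneAff H S : S → ZMod 2) * (oneAff H S : S → ZMod 2) * (Xaff bV σ₀ i : S → ZMod 2))
    = Ysym (oneAff H S) (oneAff H S) (oneAff H S) (Xaff bV σ₀ i) := by
  have hp : ((oneAff H S : S → ZMod 2) * (oneAff H S : S → ZMod 2)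
        * (Xaff bV σ₀ i : S → ZMod 2)) = mT bV σ₀ {i} := by
    funext σ
    simp [mT, oneAff_apply, Xaff_apply]
  rw [hp, delta_m, yT_single]

lemma dP2 (i j : Fin n) : deltaFun bV σ₀
      ((oneAff H S : S → ZMod 2) * (Xaff bV σ₀ i : S → ZMod 2) * (Xaff bV σ₀ j : S → ZMod 2))
    = Ysym (oneAff H S) (oneAff H S) (Xaff bV σ₀ i) (Xaff bV σ₀ j) := by
  rcases eq_or_ne i j with rfl | hne
  · have hp : ((oneAff H S : S → ZMod 2) * (Xaff bV σ₀ i : S → ZMod 2)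
        * (Xaff bV σ₀ i : S → ZMod 2)) = mT bV σ₀ {i} := by
      funext σ
      simp only [Pi.mul_apply, oneAff_apply, Xaff_apply, one_mul, mT, Finset.prod_singleton]
      exact zmod2_mul_self _
    rw [hp, delta_m, yT_single]
    -- `Y[1, Xi, Xi] = Y[1, 1, Xi]`
    conv_rhs => rw [ysym_cyc, ysym_slide]
    exact ysym_swap23 _ haff2 _ _ _
  · have hp : ((oneAff H S : S → ZMod 2) * (Xaff bV σ₀ i : S → ZMod 2)
        * (Xaff bV σ₀ j : S → ZMod 2)) = mT bV σ₀ {i, j} := by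
      funext σ
      simp only [Pi.mul_apply, oneAff_apply, Xaff_apply, one_mul, mT]
      rw [Finset.prod_pair hne]
    rw [hp, delta_m, yT_pair bV σ₀ hne]

lemma dP3 (i j k : Fin n) : deltaFun bV σ₀
      ((Xaff bV σ₀ i : S → ZMod 2) * (Xaff bV σ₀ j : S → ZMod 2) * (Xaff bV σ₀ k : S → ZMod 2))
    = Ysym (oneAff H S) (Xaff bV σ₀ i) (Xaff bV σ₀ j) (Xaff bV σ₀ k) := by
  rcases eq_or_ne i j with rfl | hij
  · -- `x_i x_i x_k = 1 x_i x_k`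
    have hp : ((Xaff bV σ₀ i : S → ZMod 2) * (Xaff bV σ₀ i : S → ZMod 2)
          * (Xaff bV σ₀ k : S → ZMod 2))
        = ((oneAff H S : S → ZMod 2) * (Xaff bV σ₀ i : S → ZMod 2)
          * (Xaff bV σ₀ k : S → ZMod 2)) := by
      funext σ
      simp only [Pi.mul_apply, oneAff_apply, Xaff_apply, one_mul]
      rw [zmod2_mul_self]
    rw [hp, dP2]
    conv_rhs => rw [ysym_slide]
  · rcases eq_or_ne i k with rfl | hik
    · -- `x_i x_j x_i = 1 x_i x_j`
      have hp : ((Xaff bV σ₀ i : S → ZMod 2) * (Xaff bV σ₀ j : S → ZMod 2)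
            * (Xaff bV σ₀ i : S → ZMod 2))
          = ((oneAff H S : S → ZMod 2) * (Xaff bV σ₀ i : S → ZMod 2)
            * (Xaff bV σ₀ j : S → ZMod 2)) := by
        funext σ
        simp only [Pi.mul_apply, oneAff_apply, Xaff_apply, one_mul]
        rw [show Xfun bV σ₀ i σ * Xfun bV σ₀ j σ * Xfun bV σ₀ i σ
            = Xfun bV σ₀ i σ * Xfun bV σ₀ i σ * Xfun bV σ₀ j σ by ring, zmod2_mul_self]
      rw [hp, dP2]
      -- `Y[Xi, Xj, Xi] = Y[Xi, Xi, Xj] = Y[1, Xi, Xj]`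
      conv_rhs => rw [ysym_cyc, ysym_cyc, ysym_slide]
    · rcases eq_or_ne j k with rfl | hjk
      · -- `x_i x_j x_j = 1 x_j x_i`
        have hp : ((Xaff bV σ₀ i : S → ZMod 2) * (Xaff bV σ₀ j : S → ZMod 2)
              * (Xaff bV σ₀ j : S → ZMod 2))
            = ((oneAff H S : S → ZMod 2) * (Xaff bV σ₀ j : S → ZMod 2)
              * (Xaff bV σ₀ i : S → ZMod 2)) := by
          funext σ
          simp only [Pi.mul_apply, oneAff_apply, Xaff_apply, one_mul]
          rw [show Xfun bV σ₀ i σ * Xfun bV σ₀ j σ * Xfun bV σ₀ j σ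
              = Xfun bV σ₀ j σ * Xfun bV σ₀ j σ * Xfun bV σ₀ i σ by ring, zmod2_mul_self]
        rw [hp, dP2]
        -- `Y[Xi, Xj, Xj] = Y[Xj, Xj, Xi] = Y[1, Xj, Xi]`
        conv_rhs => rw [ysym_cyc, ysym_slide]
      · have hp : ((Xaff bV σ₀ i : S → ZMod 2) * (Xaff bV σ₀ j : S → ZMod 2)
              * (Xaff bV σ₀ k : S → ZMod 2)) = mT bV σ₀ {i, j, k} := by
          funext σ
          simp only [Pi.mul_apply, Xaff_apply, mT]
          rw [Finset.prod_insert (by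
            rw [Finset.mem_insert, Finset.mem_singleton]
            rintro (rfl | rfl)
            · exact hij rfl
            · exact hik rfl), Finset.prod_pair hjk, mul_assoc]
        rw [hp, delta_m, yT_triple bV σ₀ hij hik hjk]

/-! #### The key computation -/

lemma dbase : ∀ u ∈ gens bV σ₀, ∀ v ∈ gens bV σ₀, ∀ w ∈ gens bV σ₀,
    deltaFun bV σ₀ ((u : S → ZMod 2) * (v : S → ZMod 2) * (w : S → ZMod 2))
      = Ysym (oneAff H S) u v w := by
  rintro u (rfl | ⟨i, rfl⟩) v (rfl | ⟨j, rfl⟩) w (rfl | ⟨k, rfl⟩)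
  · exact dP0 bV σ₀
  · exact dP1 bV σ₀ k
  · rw [show ((oneAff H S : S → ZMod 2) * (Xaff bV σ₀ j : S → ZMod 2)
        * (oneAff H S : S → ZMod 2))
      = ((oneAff H S : S → ZMod 2) * (oneAff H S : S → ZMod 2)
        * (Xaff bV σ₀ j : S → ZMod 2)) by ring, dP1]
    exact ysym_swap23 _ haff2 _ _ _
  · rw [show ((oneAff H S : S → ZMod 2) * (Xaff bV σ₀ j : S → ZMod 2)
        * (Xaff bV σ₀ k : S → ZMod 2))
      = ((oneAff H S : S → ZMod 2) * (Xaff bV σ₀ j : S → ZMod 2)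
        * (Xaff bV σ₀ k : S → ZMod 2)) by ring, dP2]
  · rw [show ((Xaff bV σ₀ i : S → ZMod 2) * (oneAff H S : S → ZMod 2)
        * (oneAff H S : S → ZMod 2))
      = ((oneAff H S : S → ZMod 2) * (oneAff H S : S → ZMod 2)
        * (Xaff bV σ₀ i : S → ZMod 2)) by ring, dP1]
    exact (ysym_cyc _ _ _ _).symm
  · rw [show ((Xaff bV σ₀ i : S → ZMod 2) * (oneAff H S : S → ZMod 2)
        * (Xaff bV σ₀ k : S → ZMod 2))
      = ((oneAff H S : S → ZMod 2) * (Xaff bV σ₀ i : S → ZMod 2)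
        * (Xaff bV σ₀ k : S → ZMod 2)) by ring, dP2]
    exact ysym_swap _ haff2 _ _ _
  · rw [show ((Xaff bV σ₀ i : S → ZMod 2) * (Xaff bV σ₀ j : S → ZMod 2)
        * (oneAff H S : S → ZMod 2))
      = ((oneAff H S : S → ZMod 2) * (Xaff bV σ₀ i : S → ZMod 2)
        * (Xaff bV σ₀ j : S → ZMod 2)) by ring, dP2]
    exact ((ysym_cyc _ _ _ _).trans (ysym_cyc _ _ _ _)).symm
  · exact dP3 bV σ₀ i j k

lemma dkey (f g h : AffineFns H S) :
    deltaFun bV σ₀ ((f : S → ZMod 2) * (g : S → ZMod 2) * (h : S → ZMod 2))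
      = Ysym (oneAff H S) f g h := by
  refine AddSubgroup.closure_induction
    (p := fun (f' : AffineFns H S) _ => ∀ g' h' : AffineFns H S,
      deltaFun bV σ₀ ((f' : S → ZMod 2) * (g' : S → ZMod 2) * (h' : S → ZMod 2))
        = Ysym (oneAff H S) f' g' h')
    ?_ ?_ ?_ ?_ (mem_closure_gens bV σ₀ f) g h
  · -- level 1 base
    intro u hu g' h'
    refine AddSubgroup.closure_induction
      (p := fun (g'' : AffineFns H S) _ => ∀ h'' : AffineFns H S,
        deltaFun bV σ₀ ((u : S → ZMod 2) * (g'' : S → ZMod 2) * (h'' : S → ZMod 2))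
          = Ysym (oneAff H S) u g'' h'')
      ?_ ?_ ?_ ?_ (mem_closure_gens bV σ₀ g') h'
    · -- level 2 base
      intro v hv h''
      refine AddSubgroup.closure_induction
        (p := fun (w : AffineFns H S) _ =>
          deltaFun bV σ₀ ((u : S → ZMod 2) * (v : S → ZMod 2) * (w : S → ZMod 2))
            = Ysym (oneAff H S) u v w)
        (fun w hw => dbase bV σ₀ u hu v hv w hw) ?_ ?_ ?_ (mem_closure_gens bV σ₀ h'')
      · beta_reduce
        rw [ZeroMemClass.coe_zero, mul_zero, deltaFun_zero, ysym_zero₃]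
      · intro x y _ _ Px Py
        beta_reduce at Px Py ⊢
        rw [AddSubgroup.coe_add, mul_add, deltaFun_add, Px, Py, ysym_add₃]
      · intro x _ Px
        beta_reduce at Px ⊢
        rwa [haffneg x]
    · -- level 2 zero
      intro h''
      rw [ZeroMemClass.coe_zero, mul_zero, zero_mul, deltaFun_zero, ysym_zero₂]
    · -- level 2 add
      intro x y _ _ Px Py h''
      beta_reduce at Px Py ⊢
      have hdist : ((u : S → ZMod 2) * ((x : S → ZMod 2) + (y : S → ZMod 2))
            * (h'' : S → ZMod 2))
          = (u : S → ZMod 2) * (x : S → ZMod 2) * (h'' : S → ZMod 2)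
            + (u : S → ZMod 2) * (y : S → ZMod 2) * (h'' : S → ZMod 2) := by ring
      rw [AddSubgroup.coe_add, hdist, deltaFun_add, Px h'', Py h'', ysym_add₂]
    · -- level 2 neg
      intro x _ Px h''
      beta_reduce at Px ⊢
      rw [haffneg x]
      exact Px h''
  · -- level 1 zero
    intro g' h'
    rw [ZeroMemClass.coe_zero, zero_mul, zero_mul, deltaFun_zero, ysym_zerol]
  · -- level 1 add
    intro x y _ _ Px Py g' h'
    beta_reduce at Px Py ⊢
    have hdist : (((x : S → ZMod 2) + (y : S → ZMod 2)) * (g' : S → ZMod 2)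
          * (h' : S → ZMod 2))
        = (x : S → ZMod 2) * (g' : S → ZMod 2) * (h' : S → ZMod 2)
          + (y : S → ZMod 2) * (g' : S → ZMod 2) * (h' : S → ZMod 2) := by ring
    rw [AddSubgroup.coe_add, hdist, deltaFun_add, Px g' h', Py g' h', ysym_addl]
  · -- level 1 neg
    intro x _ Px g' h'
    beta_reduce at Px ⊢
    rw [haffneg x]
    exact Px g' h'

lemma theta (u : YGroup (AffineFns H S) (oneAff H S)) :
    deltaFun bV σ₀ ((gammaHom u : CubicFns H S) : S → ZMod 2) = u := by
  induction u using QuotientAddGroup.induction_on with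
  | H z =>
    induction z using FreeAbelianGroup.induction_on with
    | zero =>
      rw [show ((QuotientAddGroup.mk 0 : YGroup (AffineFns H S) (oneAff H S))) = 0 from rfl,
        map_zero, ZeroMemClass.coe_zero, deltaFun_zero]
    | of t =>
      obtain ⟨f, g, h⟩ := t
      show deltaFun bV σ₀ ((gammaHom (Ysym (oneAff H S) f g h) : CubicFns H S) : S → ZMod 2)
        = Ysym (oneAff H S) f g h
      rw [gammaHom_ysym]
      exact dkey bV σ₀ f g h
    | neg t ht =>
      rw [show ((QuotientAddGroup.mk (-FreeAbelianGroup.of t) :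
          YGroup (AffineFns H S) (oneAff H S)))
        = -(QuotientAddGroup.mk (FreeAbelianGroup.of t)) from rfl]
      rw [map_neg, AddSubgroup.coe_neg, deltaFun_neg, ht, ygroup_neg _ haff2]
    | add z w hz hw =>
      rw [show ((QuotientAddGroup.mk (z + w) : YGroup (AffineFns H S) (oneAff H S)))
        = QuotientAddGroup.mk z + QuotientAddGroup.mk w from rfl]
      rw [map_add, AddSubgroup.coe_add, deltaFun_add, hz, hw]

end Main

end Stmt2Aux

theorem stmt2 (H : Type*) [AddCommGroup H] (hFG : AddGroup.FG H)
    (S : Type*) [AddTorsor (H →+ ZMod 2) S] :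
    ∃ γ : YGroup (AffineFns H S) (oneAff H S) →+ CubicFns H S,
      (∀ f₁ f₂ f₃ : AffineFns H S,
        ((γ (Ysym (oneAff H S) f₁ f₂ f₃) : S → ZMod 2)) =
          (f₁ : S → ZMod 2) * (f₂ : S → ZMod 2) * (f₃ : S → ZMod 2)) ∧
      Function.Bijective γ := by
  classical
  obtain ⟨Sgen, hgen, hfin⟩ := AddGroup.fg_iff.mp hFG
  haveI : Finite Sgen := hfin.to_subtype
  have hinj : Function.Injective fun (φ : H →+ ZMod 2) => (fun x : Sgen => φ x) := by
    intro φ ψ hφψ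
    have heq : Set.EqOn φ ψ Sgen := fun x hx => congrFun hφψ ⟨x, hx⟩
    exact AddMonoidHom.eq_of_eqOn_dense hgen heq
  haveI : Finite (H →+ ZMod 2) := Finite.of_injective _ hinj
  haveI : Module.Finite (ZMod 2) (H →+ ZMod 2) := Module.Finite.of_finite
  let bV := Module.finBasis (ZMod 2) (H →+ ZMod 2)
  obtain ⟨σ₀⟩ := (AddTorsor.nonempty : Nonempty S)
  refine ⟨Stmt2Aux.gammaHom, fun f₁ f₂ f₃ => Stmt2Aux.gammaHom_ysym f₁ f₂ f₃, ?_, ?_⟩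
  · have hli : Function.LeftInverse
        (fun c : CubicFns H S => Stmt2Aux.deltaFun bV σ₀ (c : S → ZMod 2))
        Stmt2Aux.gammaHom := fun u => Stmt2Aux.theta bV σ₀ u
    exact hli.injective
  · intro c
    have hmem := c.2
    have main : ∀ x (_ : x ∈ CubicFns H S),
        ∃ u, ((Stmt2Aux.gammaHom u : CubicFns H S) : S → ZMod 2) = x := by
      intro x hx
      refine AddSubgroup.closure_induction
        (p := fun x _ => ∃ u, ((Stmt2Aux.gammaHom u : CubicFns H S) : S → ZMod 2) = x)
        ?_ ?_ ?_ ?_ hx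
      · rintro x ⟨f₁, f₂, f₃, h₁, h₂, h₃, rfl⟩
        exact ⟨Ysym (oneAff H S) ⟨f₁, h₁⟩ ⟨f₂, h₂⟩ ⟨f₃, h₃⟩,
          Stmt2Aux.gammaHom_ysym ⟨f₁, h₁⟩ ⟨f₂, h₂⟩ ⟨f₃, h₃⟩⟩
      · exact ⟨0, by rw [map_zero, ZeroMemClass.coe_zero]⟩
      · rintro x y _ _ ⟨u, hu⟩ ⟨v, hv⟩
        exact ⟨u + v, by rw [map_add, AddSubgroup.coe_add, hu, hv]⟩
      · rintro x _ ⟨u, hu⟩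
        exact ⟨-u, by rw [map_neg, AddSubgroup.coe_neg, hu]⟩
    obtain ⟨u, hu⟩ := main c c.2
    exact ⟨u, Subtype.ext hu⟩
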